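/- arXiv:1007.4980 — 4 statements merged into one kernel-verified Lean document; each statement's English description precedes it below -/
import Mathlib

section
/- Let 1 < q < p be reals, and let g : (0,1] → [0,∞) be a decreasing measurable function with ∫₀¹ g(t) dt = f and g(t) ≤ ((p-1)/p) t^{-1/p} for all t ∈ (0,1]. Then ∫₀¹ g(t)^q dt ≤ Γ f^{(p-q)/(p-1)}, where Γ = ((p-1)/p)^q · p/(p-q). -/
open MeasureTheory Set

private lemma rpow_integrableOn (r : ℝ) (hr : -1 < r) :
    IntegrableOn (fun t : ℝ => t ^ r) (Set.Ioc (0:ℝ) 1) := by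
  have := intervalIntegral.intervalIntegrable_rpow' (a := (0:ℝ)) (b := 1) hr
  rwa [intervalIntegrable_iff_integrableOn_Ioc_of_le (by norm_num)] at this

private lemma rpow_setIntegral (r : ℝ) (hr : -1 < r) (b : ℝ) (hb : 0 < b) :
    ∫ t in Set.Ioc (0:ℝ) b, t ^ r = b ^ (r + 1) / (r + 1) := by
  rw [← intervalIntegral.integral_of_le hb.le, integral_rpow (Or.inl hr),
    Real.zero_rpow (by linarith)]
  ring

theorem stmt_2 (p q : ℝ) (hq : 1 < q) (hqp : q < p)
    (g : ℝ → ℝ) (hgm : Measurable g)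
    (hg0 : ∀ t ∈ Set.Ioc (0:ℝ) 1, 0 ≤ g t)
    (hdec : AntitoneOn g (Set.Ioc (0:ℝ) 1))
    (hle : ∀ t ∈ Set.Ioc (0:ℝ) 1, g t ≤ ((p - 1) / p) * t ^ (-(1:ℝ)/p))
    (f : ℝ) (hf : ∫ t in Set.Ioc (0:ℝ) 1, g t = f) :
    ∫ t in Set.Ioc (0:ℝ) 1, (g t) ^ q ≤
      (((p - 1) / p) ^ q * (p / (p - q))) * f ^ ((p - q) / (p - 1)) := by
  have hp1 : 1 < p := hq.trans hqp
  have hp0 : 0 < p := by linarith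
  have hq0 : 0 < q := by linarith
  have hpq : 0 < p - q := by linarith
  set c : ℝ := (p - 1) / p with hc_def
  have hc0 : 0 < c := div_pos (by linarith) hp0
  have hr1 : (-1:ℝ) < -(1:ℝ)/p := by
    rw [neg_div, neg_lt_neg_iff]
    rw [div_lt_one hp0]; linarith
  have hr2 : (-1:ℝ) < (-(1:ℝ)/p) * q := by
    have : (-(1:ℝ)/p) * q = -(q/p) := by ring
    rw [this, neg_lt_neg_iff, div_lt_one hp0]; exact hqp
  -- ψ t = c * t ^ (-(1)/p)
  have hψpos : ∀ t : ℝ, 0 < t → 0 < c * t ^ (-(1:ℝ)/p) := fun t ht =>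
    mul_pos hc0 (Real.rpow_pos_of_pos ht _)
  -- integrability of g
  have hψint : IntegrableOn (fun t : ℝ => c * t ^ (-(1:ℝ)/p)) (Set.Ioc (0:ℝ) 1) :=
    (rpow_integrableOn _ hr1).const_mul c
  have hgint : IntegrableOn g (Set.Ioc (0:ℝ) 1) := by
    refine hψint.mono' hgm.aestronglyMeasurable ?_
    refine ae_restrict_of_forall_mem measurableSet_Ioc fun t ht => ?_
    rw [Real.norm_eq_abs, abs_of_nonneg (hg0 t ht)]
    exact hle t ht
  -- g^q bound and integrability
  have hgq_le : ∀ t ∈ Set.Ioc (0:ℝ) 1, g t ^ q ≤ c ^ q * t ^ ((-(1:ℝ)/p) * q) := by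
    intro t ht
    have h1 : g t ^ q ≤ (c * t ^ (-(1:ℝ)/p)) ^ q :=
      Real.rpow_le_rpow (hg0 t ht) (hle t ht) hq0.le
    calc g t ^ q ≤ (c * t ^ (-(1:ℝ)/p)) ^ q := h1
      _ = c ^ q * t ^ ((-(1:ℝ)/p) * q) := by
          rw [Real.mul_rpow hc0.le (Real.rpow_nonneg ht.1.le _),
            ← Real.rpow_mul ht.1.le]
  have hgqint : IntegrableOn (fun t : ℝ => g t ^ q) (Set.Ioc (0:ℝ) 1) := by
    refine (((rpow_integrableOn _ hr2).const_mul (c ^ q)).mono'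
      ((hgm.pow_const q).aestronglyMeasurable) ?_)
    refine ae_restrict_of_forall_mem measurableSet_Ioc fun t ht => ?_
    rw [Real.norm_eq_abs, abs_of_nonneg (Real.rpow_nonneg (hg0 t ht) q)]
    exact hgq_le t ht
  -- f is nonneg and ≤ 1
  have hf0 : 0 ≤ f := hf ▸ setIntegral_nonneg measurableSet_Ioc hg0
  have hψtot : ∫ t in Set.Ioc (0:ℝ) 1, c * t ^ (-(1:ℝ)/p) = 1 := by
    rw [integral_const_mul, rpow_setIntegral _ hr1 1 one_pos, Real.one_rpow]
    have : -(1:ℝ)/p + 1 = c := by rw [hc_def]; field_simp; ring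
    rw [this, mul_one_div, div_self hc0.ne']
  have hf1 : f ≤ 1 := by
    have h := setIntegral_mono_on hgint hψint measurableSet_Ioc hle
    rw [hf, hψtot] at h
    exact h
  rcases eq_or_lt_of_le hf0 with hfz | hfpos
  · -- f = 0 case
    have hfz' : f = 0 := hfz.symm
    have hgz : g =ᵐ[volume.restrict (Set.Ioc (0:ℝ) 1)] 0 := by
      rw [← integral_eq_zero_iff_of_nonneg_ae
        (ae_restrict_of_forall_mem measurableSet_Ioc hg0) hgint]
      rw [hf, hfz']
    have : ∫ t in Set.Ioc (0:ℝ) 1, g t ^ q = 0 := by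
      rw [integral_congr_ae (g := fun _ => (0:ℝ)) ?_, integral_zero]
      filter_upwards [hgz] with t ht
      simp only [Pi.zero_apply] at ht
      rw [ht, Real.zero_rpow hq0.ne']
    have hne : (p - q) / (p - 1) ≠ 0 := div_ne_zero hpq.ne' (by linarith)
    rw [this, hfz', Real.zero_rpow hne, mul_zero]
  · -- main case : 0 < f
    set a : ℝ := f ^ (p / (p-1)) with ha_def
    have hppos : 0 < p / (p-1) := div_pos hp0 (by linarith)
    have ha0 : 0 < a := Real.rpow_pos_of_pos hfpos _
    have ha1 : a ≤ 1 := Real.rpow_le_one hf0 hf1 hppos.le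
    have haI : a ∈ Set.Ioc (0:ℝ) 1 := ⟨ha0, ha1⟩
    have haf : a ^ ((p-1)/p) = f := by
      rw [ha_def, ← Real.rpow_mul hf0]
      have hp1' : p - 1 ≠ 0 := by linarith
      have : p / (p-1) * ((p-1)/p) = 1 := by
        field_simp
      rw [this, Real.rpow_one]
    have harpow : ∀ s : ℝ, a ^ s = f ^ (p / (p-1) * s) := fun s => by
      rw [ha_def, ← Real.rpow_mul hf0]
    set K : ℝ := (c * a ^ (-(1:ℝ)/p)) ^ (q-1) with hK_def
    have hK0 : 0 ≤ K := Real.rpow_nonneg (hψpos a ha0).le _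
    have hsub1 : Set.Ioc (0:ℝ) a ⊆ Set.Ioc (0:ℝ) 1 := Set.Ioc_subset_Ioc_right ha1
    have hsub2 : Set.Ioc a 1 ⊆ Set.Ioc (0:ℝ) 1 := Set.Ioc_subset_Ioc_left ha0.le
    -- key pointwise fact: g t ^ q ≤ ψ(s)^(q-1) * g t whenever g t ≤ ψ(s)
    have hkey : ∀ t s : ℝ, 0 ≤ g t → 0 < s → g t ≤ c * s ^ (-(1:ℝ)/p) →
        g t ^ q ≤ (c * s ^ (-(1:ℝ)/p)) ^ (q-1) * g t := by
      intro t s hgt hs hgs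
      rcases eq_or_lt_of_le hgt with h0 | h0
      · rw [← h0, Real.zero_rpow hq0.ne', mul_zero]
      · have : g t ^ q = g t ^ (q-1) * g t := by
          rw [show q = q - 1 + 1 by ring, Real.rpow_add h0, Real.rpow_one]
          ring_nf
        rw [this]
        exact mul_le_mul_of_nonneg_right
          (Real.rpow_le_rpow hgt hgs (by linarith)) hgt
    -- bound on (0, a]
    have hbound1 : ∀ t ∈ Set.Ioc (0:ℝ) a,
        g t ^ q ≤ K * g t + (c ^ q * t ^ ((-(1:ℝ)/p) * q) - K * (c * t ^ (-(1:ℝ)/p))) := by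
      intro t ht
      have ht1 : t ∈ Set.Ioc (0:ℝ) 1 := hsub1 ht
      have hgt := hg0 t ht1
      have hψt := hψpos t ht.1
      have hKψ : K ≤ (c * t ^ (-(1:ℝ)/p)) ^ (q-1) := by
        refine Real.rpow_le_rpow (hψpos a ha0).le ?_ (by linarith)
        exact mul_le_mul_of_nonneg_left
          (Real.rpow_le_rpow_of_nonpos ht.1 ht.2
            (by rw [neg_div]; exact neg_nonpos_of_nonneg (by positivity))) hc0.le
      have step1 : g t ^ q ≤ (c * t ^ (-(1:ℝ)/p)) ^ (q-1) * g t :=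
        hkey t t hgt ht.1 (hle t ht1)
      have step2 : (c * t ^ (-(1:ℝ)/p)) ^ (q-1) * g t ≤
          K * g t + ((c * t ^ (-(1:ℝ)/p)) ^ (q-1) - K) * (c * t ^ (-(1:ℝ)/p)) := by
        have : (c * t ^ (-(1:ℝ)/p)) ^ (q-1) * g t
            = K * g t + ((c * t ^ (-(1:ℝ)/p)) ^ (q-1) - K) * g t := by ring
        rw [this]
        exact add_le_add le_rfl (mul_le_mul_of_nonneg_left (hle t ht1) (by linarith))
      have hψq : ((c * t ^ (-(1:ℝ)/p)) ^ (q-1)) * (c * t ^ (-(1:ℝ)/p))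
          = c ^ q * t ^ ((-(1:ℝ)/p) * q) := by
        rw [show ((c * t ^ (-(1:ℝ)/p)) ^ (q-1)) * (c * t ^ (-(1:ℝ)/p))
            = (c * t ^ (-(1:ℝ)/p)) ^ (q-1) * (c * t ^ (-(1:ℝ)/p)) ^ (1:ℝ) by
              rw [Real.rpow_one],
          ← Real.rpow_add hψt, sub_add_cancel,
          Real.mul_rpow hc0.le (Real.rpow_nonneg ht.1.le _), ← Real.rpow_mul ht.1.le]
      calc g t ^ q ≤ (c * t ^ (-(1:ℝ)/p)) ^ (q-1) * g t := step1
        _ ≤ K * g t + ((c * t ^ (-(1:ℝ)/p)) ^ (q-1) - K) * (c * t ^ (-(1:ℝ)/p)) := step2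
        _ = K * g t + (c ^ q * t ^ ((-(1:ℝ)/p) * q) - K * (c * t ^ (-(1:ℝ)/p))) := by
            rw [sub_mul, hψq]
    -- bound on (a, 1]
    have hbound2 : ∀ t ∈ Set.Ioc a 1, g t ^ q ≤ K * g t := by
      intro t ht
      have ht1 : t ∈ Set.Ioc (0:ℝ) 1 := hsub2 ht
      have hga : g t ≤ g a := hdec haI ht1 ht.1.le
      exact hkey t a (hg0 t ht1) ha0 (hga.trans (hle a haI))
    -- integrability on pieces
    have hgint1 : IntegrableOn g (Set.Ioc (0:ℝ) a) := hgint.mono_set hsub1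
    have hgint2 : IntegrableOn g (Set.Ioc a 1) := hgint.mono_set hsub2
    have hgqint1 : IntegrableOn (fun t => g t ^ q) (Set.Ioc (0:ℝ) a) := hgqint.mono_set hsub1
    have hgqint2 : IntegrableOn (fun t => g t ^ q) (Set.Ioc a 1) := hgqint.mono_set hsub2
    have hint_r2 : IntegrableOn (fun t : ℝ => c ^ q * t ^ ((-(1:ℝ)/p) * q))
        (Set.Ioc (0:ℝ) a) := ((rpow_integrableOn _ hr2).mono_set hsub1).const_mul _
    have hint_r1 : IntegrableOn (fun t : ℝ => K * (c * t ^ (-(1:ℝ)/p)))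
        (Set.Ioc (0:ℝ) a) :=
      (((rpow_integrableOn _ hr1).mono_set hsub1).const_mul c).const_mul K
    have hint_sub : IntegrableOn
        (fun t : ℝ => c ^ q * t ^ ((-(1:ℝ)/p) * q) - K * (c * t ^ (-(1:ℝ)/p)))
        (Set.Ioc (0:ℝ) a) := hint_r2.sub hint_r1
    have hRint : IntegrableOn
        (fun t : ℝ => K * g t + (c ^ q * t ^ ((-(1:ℝ)/p) * q) - K * (c * t ^ (-(1:ℝ)/p))))
        (Set.Ioc (0:ℝ) a) := (hgint1.const_mul K).add hint_sub
    -- split the integrals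
    have hdisj : Disjoint (Set.Ioc (0:ℝ) a) (Set.Ioc a 1) := Set.Ioc_disjoint_Ioc_of_le le_rfl
    have hunion : Set.Ioc (0:ℝ) a ∪ Set.Ioc a 1 = Set.Ioc (0:ℝ) 1 :=
      Set.Ioc_union_Ioc_eq_Ioc ha0.le ha1
    have hsplitg : (∫ t in Set.Ioc (0:ℝ) a, g t) + ∫ t in Set.Ioc a 1, g t = f := by
      rw [← hf, ← hunion, setIntegral_union hdisj measurableSet_Ioc hgint1 hgint2]
    have hsplitgq : ∫ t in Set.Ioc (0:ℝ) 1, g t ^ q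
        = (∫ t in Set.Ioc (0:ℝ) a, g t ^ q) + ∫ t in Set.Ioc a 1, g t ^ q := by
      rw [← hunion, setIntegral_union hdisj measurableSet_Ioc hgqint1 hgqint2]
    -- integrate the bounds
    have hI1 : ∫ t in Set.Ioc (0:ℝ) a, g t ^ q ≤
        K * (∫ t in Set.Ioc (0:ℝ) a, g t)
          + (c ^ q * (a ^ ((-(1:ℝ)/p) * q + 1) / ((-(1:ℝ)/p) * q + 1))
            - K * (c * (a ^ (-(1:ℝ)/p + 1) / (-(1:ℝ)/p + 1)))) := by
      have := setIntegral_mono_on hgqint1 hRint measurableSet_Ioc hbound1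
      refine this.trans_eq ?_
      rw [integral_add (hgint1.const_mul K) hint_sub,
        integral_sub hint_r2 hint_r1,
        integral_const_mul, integral_const_mul, integral_const_mul, integral_const_mul,
        rpow_setIntegral _ hr2 a ha0, rpow_setIntegral _ hr1 a ha0]
    have hI2 : ∫ t in Set.Ioc a 1, g t ^ q ≤ K * ∫ t in Set.Ioc a 1, g t := by
      have := setIntegral_mono_on hgqint2 (hgint2.const_mul K) measurableSet_Ioc hbound2
      rwa [integral_const_mul] at this
    -- put everything together
    have hmass : c * (a ^ (-(1:ℝ)/p + 1) / (-(1:ℝ)/p + 1)) = f := by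
      have he : -(1:ℝ)/p + 1 = (p-1)/p := by field_simp; ring
      rw [he, mul_comm, div_mul_cancel₀ _ hc0.ne', haf]
    have hsecond : c ^ q * (a ^ ((-(1:ℝ)/p) * q + 1) / ((-(1:ℝ)/p) * q + 1))
        = c ^ q * (p / (p - q)) * f ^ ((p - q) / (p - 1)) := by
      have he : (-(1:ℝ)/p) * q + 1 = (p-q)/p := by field_simp; ring
      rw [he, harpow ((p-q)/p)]
      have he2 : p / (p-1) * ((p-q)/p) = (p-q)/(p-1) := by
        rw [div_mul_div_comm, mul_comm p (p-q), mul_div_mul_right _ _ hp0.ne']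
      rw [he2]
      rw [div_div_eq_mul_div, mul_comm (f ^ ((p-q)/(p-1))) p, mul_div_assoc]
      ring
    calc ∫ t in Set.Ioc (0:ℝ) 1, g t ^ q
        = (∫ t in Set.Ioc (0:ℝ) a, g t ^ q) + ∫ t in Set.Ioc a 1, g t ^ q := hsplitgq
      _ ≤ (K * (∫ t in Set.Ioc (0:ℝ) a, g t)
            + (c ^ q * (a ^ ((-(1:ℝ)/p) * q + 1) / ((-(1:ℝ)/p) * q + 1))
              - K * (c * (a ^ (-(1:ℝ)/p + 1) / (-(1:ℝ)/p + 1)))))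
          + K * ∫ t in Set.Ioc a 1, g t := add_le_add hI1 hI2
      _ = K * ((∫ t in Set.Ioc (0:ℝ) a, g t) + ∫ t in Set.Ioc a 1, g t)
            + c ^ q * (a ^ ((-(1:ℝ)/p) * q + 1) / ((-(1:ℝ)/p) * q + 1))
            - K * (c * (a ^ (-(1:ℝ)/p + 1) / (-(1:ℝ)/p + 1))) := by ring
      _ = K * f + c ^ q * (p / (p - q)) * f ^ ((p-q)/(p-1)) - K * f := by
          rw [hsplitg, hmass, hsecond]
      _ = c ^ q * (p / (p - q)) * f ^ ((p-q)/(p-1)) := by ring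
end

section
/- Let 1 < q < p and (p-1)/p < f ≤ 1. Set c = (p(1-f))^{p/(p-1)}, and define g₂ : (0,1] → [0,∞) by g₂(t) = ((p-1)/p) c^{-1/p} for t ∈ (0,c] and g₂(t) = ((p-1)/p) t^{-1/p} for t ∈ (c,1]. Then ∫₀¹ g₂(t) dt = f and ∫₀¹ g₂(t)^q dt = ((p-1)/p)^q · (1/(p-q)) · (p - q·(p(1-f))^{(p-q)/(p-1)}). -/
open MeasureTheory Set

lemma aux_piecewise_integral (c K A r : ℝ) (hc0 : 0 ≤ c) (hc1 : c ≤ 1) (hr : -1 < r)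
    (g : ℝ → ℝ)
    (hg : ∀ t ∈ Set.Ioc (0:ℝ) 1, g t = if t ≤ c then K else A * t ^ r) :
    ∫ t in Set.Ioc (0:ℝ) 1, g t = c * K + A * ((1 - c ^ (r + 1)) / (r + 1)) := by
  have hEq1 : EqOn (fun _ : ℝ => K) g (Ioc 0 c) := by
    intro t ht
    rw [hg t ⟨ht.1, ht.2.trans hc1⟩, if_pos ht.2]
  have hEq2 : EqOn (fun t : ℝ => A * t ^ r) g (Ioc c 1) := by
    intro t ht
    rw [hg t ⟨lt_of_le_of_lt hc0 ht.1, ht.2⟩, if_neg (not_le.2 ht.1)]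
  have i1 : IntegrableOn g (Ioc 0 c) := by
    exact (integrableOn_const (by simp [Real.volume_Ioc])).congr_fun
      hEq1 measurableSet_Ioc
  have i2 : IntegrableOn g (Ioc c 1) := by
    refine (IntegrableOn.congr_fun ?_ hEq2 measurableSet_Ioc)
    have := (intervalIntegral.intervalIntegrable_rpow' (a := c) (b := 1) hr).const_mul A
    rwa [intervalIntegrable_iff_integrableOn_Ioc_of_le hc1] at this
  have hsplit : ∫ t in Set.Ioc (0:ℝ) 1, g t
      = (∫ t in Set.Ioc (0:ℝ) c, g t) + ∫ t in Set.Ioc c 1, g t := by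
    rw [← Ioc_union_Ioc_eq_Ioc hc0 hc1,
      setIntegral_union (Ioc_disjoint_Ioc_of_le le_rfl) measurableSet_Ioc i1 i2]
  have h1 : ∫ t in Set.Ioc (0:ℝ) c, g t = c * K := by
    rw [← setIntegral_congr_fun measurableSet_Ioc hEq1, setIntegral_const,
      Real.volume_real_Ioc_of_le hc0, smul_eq_mul, sub_zero]
  have h2 : ∫ t in Set.Ioc c 1, g t = A * ((1 - c ^ (r + 1)) / (r + 1)) := by
    rw [← setIntegral_congr_fun measurableSet_Ioc hEq2,
      ← intervalIntegral.integral_of_le hc1, intervalIntegral.integral_const_mul,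
      integral_rpow (Or.inl hr), Real.one_rpow]
  rw [hsplit, h1, h2]

theorem stmt_4 (p q : ℝ) (hq : 1 < q) (hqp : q < p)
    (f : ℝ) (hf0 : (p - 1) / p < f) (hf1 : f ≤ 1)
    (c : ℝ) (hc : c = (p * (1 - f)) ^ (p / (p - 1)))
    (g₂ : ℝ → ℝ)
    (hg₂ : ∀ t : ℝ, g₂ t =
      if t ≤ c then ((p - 1) / p) * c ^ (-(1:ℝ)/p)
      else ((p - 1) / p) * t ^ (-(1:ℝ)/p)) :
    (∫ t in Set.Ioc (0:ℝ) 1, g₂ t = f) ∧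
    (∫ t in Set.Ioc (0:ℝ) 1, (g₂ t) ^ q =
      ((p - 1) / p) ^ q * (1 / (p - q)) *
        (p - q * (p * (1 - f)) ^ ((p - q) / (p - 1)))) := by
  have hp1 : (1:ℝ) < p := hq.trans hqp
  have hp0 : (0:ℝ) < p := by linarith
  have hpm1 : (0:ℝ) < p - 1 := by linarith
  set b : ℝ := p * (1 - f) with hbdef
  have hb0 : 0 ≤ b := mul_nonneg hp0.le (by linarith)
  have hb1 : b < 1 := by
    have : p - 1 < p * f := by
      have := (div_lt_iff₀ hp0).1 hf0
      linarith
    simp only [hbdef]; nlinarith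
  have hA0 : (0:ℝ) < (p - 1) / p := div_pos hpm1 hp0
  have hc0 : 0 ≤ c := by rw [hc]; exact Real.rpow_nonneg hb0 _
  have hc1 : c ≤ 1 := by
    rw [hc]
    exact Real.rpow_le_one hb0 hb1.le (le_of_lt (div_pos hp0 hpm1))
  -- key rpow computations
  have hcb : ∀ s : ℝ, c ^ (s / p) = b ^ (s / (p - 1)) := by
    intro s
    rw [hc, ← Real.rpow_mul hb0]
    congr 1
    field_simp
  constructor
  · have h := aux_piecewise_integral c (((p - 1) / p) * c ^ (-(1:ℝ)/p)) ((p - 1) / p)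
      (-(1:ℝ)/p) hc0 hc1 (by rw [neg_div]; rw [neg_lt_neg_iff]; exact (div_lt_one hp0).2 hp1)
      g₂ (fun t _ => hg₂ t)
    rw [h]
    have hxp : (p - 1)/p = 1 + (-(1:ℝ)/p) := by field_simp; ring
    have e1 : c * (((p - 1) / p) * c ^ (-(1:ℝ)/p)) = ((p - 1) / p) * c ^ ((p-1)/p) := by
      have : c ^ ((p-1)/p) = c ^ (1:ℝ) * c ^ (-(1:ℝ)/p) := by
        rw [hxp, Real.rpow_add' hc0 (by rw [← hxp]; exact (div_pos hpm1 hp0).ne')]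
      rw [this, Real.rpow_one]; ring
    have e2 : (-(1:ℝ)/p + 1) = (p - 1)/p := by rw [hxp]; ring
    rw [e1, e2, hcb (p - 1)]
    have : b ^ ((p-1)/(p-1)) = b := by
      rw [div_self hpm1.ne', Real.rpow_one]
    rw [this]
    field_simp
    ring
  · have hr' : -1 < -(q)/p := by
      rw [neg_div, neg_lt_neg_iff]; exact (div_lt_one hp0).2 hqp
    have h := aux_piecewise_integral c ((((p - 1) / p) * c ^ (-(1:ℝ)/p)) ^ q) (((p - 1) / p) ^ q)
      (-(q)/p) hc0 hc1 hr' (fun t => (g₂ t) ^ q) ?_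
    · rw [h]
      have hKq : (((p - 1) / p) * c ^ (-(1:ℝ)/p)) ^ q
          = ((p - 1) / p) ^ q * c ^ (-(q)/p) := by
        rw [Real.mul_rpow hA0.le (Real.rpow_nonneg hc0 _), ← Real.rpow_mul hc0]
        congr 2
        ring
      rw [hKq]
      have hpq : (0:ℝ) < p - q := by linarith
      have hxp : (p - q)/p = 1 + (-(q)/p) := by field_simp; ring
      have e1 : c * (((p - 1) / p) ^ q * c ^ (-(q)/p))
          = ((p - 1) / p) ^ q * c ^ ((p - q)/p) := by
        have : c ^ ((p - q)/p) = c ^ (1:ℝ) * c ^ (-(q)/p) := by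
          rw [hxp, Real.rpow_add' hc0 (by rw [← hxp]; exact (div_pos hpq hp0).ne')]
        rw [this, Real.rpow_one]; ring
      have e2 : (-(q)/p + 1) = (p - q)/p := by rw [hxp]; ring
      rw [e1, e2, hcb (p - q)]
      field_simp
      ring
    · intro t ht
      show g₂ t ^ q = _
      rw [hg₂ t]
      split_ifs with hle
      · rfl
      · rw [Real.mul_rpow hA0.le (Real.rpow_nonneg ht.1.le _), ← Real.rpow_mul ht.1.le]
        congr 2
        ring
end

section
/- Let 1 < q < p and (p-1)/p < f ≤ 1. If g : (0,1] → [0,∞) is measurable with g(t) ≤ ((p-1)/p) t^{-1/p} for all t ∈ (0,1] and ∫₀¹ g(t) dt = f, then ∫₀¹ g(t)^q dt ≥ ((p-1)/p)^q · (1/(p-q)) · (p - q·(p(1-f))^{(p-q)/(p-1)}). -/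
open MeasureTheory Set Real

lemma aux_tangent {q a b : ℝ} (hq : 1 ≤ q) (ha : 0 ≤ a) (hb : 0 < b) :
    b ^ q + q * b ^ (q - 1) * (a - b) ≤ a ^ q := by
  have hs : -1 ≤ a / b - 1 := by
    have : 0 ≤ a / b := div_nonneg ha hb.le
    linarith
  have h := one_add_mul_self_le_rpow_one_add hs hq
  have h1 : (1 + (a / b - 1)) = a / b := by ring
  rw [h1] at h
  have hbq : (0:ℝ) < b ^ q := rpow_pos_of_pos hb q
  have h2 : (b ^ q) * (1 + q * (a / b - 1)) ≤ (b ^ q) * ((a / b) ^ q) :=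
    mul_le_mul_of_nonneg_left h hbq.le
  have h3 : (b ^ q) * ((a / b) ^ q) = a ^ q := by
    rw [div_rpow ha hb.le]; field_simp
  have h4 : b ^ (q - 1) = b ^ q / b := by rw [rpow_sub hb, rpow_one]
  rw [h3] at h2
  rw [h4]
  calc b ^ q + q * (b ^ q / b) * (a - b) = b ^ q * (1 + q * (a / b - 1)) := by
        field_simp
    _ ≤ a ^ q := h2

lemma aux_meas {f : ℝ → ℝ} (hf : Measurable f) (r : ℝ) :
    Measurable fun t : ℝ => f t ^ r := by measurability

lemma aux_int_rpow {r : ℝ} (hr : -1 < r) {a : ℝ} (ha1 : a ≤ 1) :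
    ∫ t in Ioc a 1, t ^ r = (1 - a ^ (r + 1)) / (r + 1) := by
  rw [← intervalIntegral.integral_of_le ha1, integral_rpow (Or.inl hr), Real.one_rpow]

theorem stmt_5 (p q : ℝ) (hq : 1 < q) (hqp : q < p)
    (f : ℝ) (hf0 : (p - 1) / p < f) (hf1 : f ≤ 1)
    (g : ℝ → ℝ) (hgm : Measurable g)
    (hg0 : ∀ t ∈ Set.Ioc (0:ℝ) 1, 0 ≤ g t)
    (hle : ∀ t ∈ Set.Ioc (0:ℝ) 1, g t ≤ ((p - 1) / p) * t ^ (-(1:ℝ)/p))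
    (hf : ∫ t in Set.Ioc (0:ℝ) 1, g t = f) :
    ((p - 1) / p) ^ q * (1 / (p - q)) *
        (p - q * (p * (1 - f)) ^ ((p - q) / (p - 1))) ≤
      ∫ t in Set.Ioc (0:ℝ) 1, (g t) ^ q := by
  have hp1 : 1 < p := hq.trans hqp
  have hp0 : 0 < p := by linarith
  have hq0 : 0 < q := by linarith
  have hpq : 0 < p - q := by linarith
  set c : ℝ := (p - 1) / p with hc_def
  have hc0 : 0 < c := div_pos (by linarith) hp0
  have hc1 : c < 1 := (div_lt_one hp0).2 (by linarith)
  have hrp : (-1:ℝ) < -(1:ℝ)/p := by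
    rw [neg_div, neg_lt_neg_iff, div_lt_one hp0]; exact hp1
  have hrq : (-1:ℝ) < (-(1:ℝ)/p) * q := by
    have h1 : (1/p) * q < 1 := by
      rw [div_mul_eq_mul_div, one_mul, div_lt_one hp0]; exact hqp
    calc (-1:ℝ) < -((1/p)*q) := by linarith
      _ = (-(1:ℝ)/p) * q := by ring
  -- ψ and ψ^q integrable on Ioc 0 1
  have hψint : IntegrableOn (fun t : ℝ => c * t ^ (-(1:ℝ)/p)) (Ioc 0 1) volume := by
    have h := (intervalIntegral.intervalIntegrable_rpow' (a := 0) (b := 1) hrp).const_mul c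
    exact (intervalIntegrable_iff_integrableOn_Ioc_of_le zero_le_one).1 h
  have hψq_eq : EqOn (fun t : ℝ => (c * t ^ (-(1:ℝ)/p)) ^ q)
      (fun t : ℝ => c ^ q * t ^ ((-(1:ℝ)/p) * q)) (Ioc 0 1) := by
    intro t ht
    simp only
    rw [mul_rpow hc0.le (rpow_nonneg ht.1.le _), ← rpow_mul ht.1.le]
  have hψqint : IntegrableOn (fun t : ℝ => (c * t ^ (-(1:ℝ)/p)) ^ q) (Ioc 0 1) volume := by
    refine (IntegrableOn.congr_fun ?_ hψq_eq.symm measurableSet_Ioc)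
    have h := (intervalIntegral.intervalIntegrable_rpow' (a := 0) (b := 1) hrq).const_mul (c ^ q)
    exact (intervalIntegrable_iff_integrableOn_Ioc_of_le zero_le_one).1 h
  -- g and g^q integrable
  have hgae : ∀ᵐ t ∂(volume.restrict (Ioc (0:ℝ) 1)), ‖g t‖ ≤ c * t ^ (-(1:ℝ)/p) := by
    rw [ae_restrict_iff' measurableSet_Ioc]
    exact ae_of_all _ fun t ht => by
      rw [Real.norm_eq_abs, abs_of_nonneg (hg0 t ht)]; exact hle t ht
  have hgint : IntegrableOn g (Ioc 0 1) volume :=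
    Integrable.mono' hψint hgm.aestronglyMeasurable.restrict hgae
  have hgqae : ∀ᵐ t ∂(volume.restrict (Ioc (0:ℝ) 1)),
      ‖g t ^ q‖ ≤ (c * t ^ (-(1:ℝ)/p)) ^ q := by
    rw [ae_restrict_iff' measurableSet_Ioc]
    refine ae_of_all _ fun t ht => ?_
    rw [Real.norm_eq_abs, abs_of_nonneg (rpow_nonneg (hg0 t ht) q)]
    exact rpow_le_rpow (hg0 t ht) (hle t ht) hq0.le
  have hgqmeas : Measurable fun t : ℝ => g t ^ q := aux_meas hgm q
  have hgqint : IntegrableOn (fun t : ℝ => g t ^ q) (Ioc 0 1) volume :=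
    Integrable.mono' hψqint hgqmeas.aestronglyMeasurable.restrict hgqae
  -- the integral of ψ over Ioc 0 1 is 1, of ψ^q is c^q * p/(p-q)
  have hr1 : -(1:ℝ)/p + 1 = (p-1)/p := by field_simp; ring
  have hr2 : (-(1:ℝ)/p) * q + 1 = (p-q)/p := by field_simp; ring
  have hψI : ∫ t in Ioc (0:ℝ) 1, c * t ^ (-(1:ℝ)/p) = 1 := by
    rw [integral_const_mul, aux_int_rpow hrp zero_le_one, hr1,
      zero_rpow (by positivity : (p-1)/p ≠ 0)]
    rw [hc_def]
    field_simp
    rw [sub_zero, mul_one, div_self (by linarith : p - (1:ℝ) ≠ 0)]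
  have hψqI : ∫ t in Ioc (0:ℝ) 1, (c * t ^ (-(1:ℝ)/p)) ^ q = c ^ q * (p / (p - q)) := by
    rw [setIntegral_congr_fun measurableSet_Ioc hψq_eq, integral_const_mul,
      aux_int_rpow hrq zero_le_one, hr2,
      zero_rpow (by positivity : (p-q)/p ≠ 0)]
    rw [sub_zero, one_div_div]
  rcases eq_or_lt_of_le hf1 with hfe | hflt
  · -- case f = 1 : g = ψ a.e.
    have hzero : ∫ t in Ioc (0:ℝ) 1, (c * t ^ (-(1:ℝ)/p) - g t) = 0 := by
      rw [integral_sub hψint hgint, hψI, hf, hfe]; norm_num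
    have hnn : 0 ≤ᵐ[volume.restrict (Ioc (0:ℝ) 1)]
        fun t => c * t ^ (-(1:ℝ)/p) - g t := by
      rw [Filter.EventuallyLE, ae_restrict_iff' measurableSet_Ioc]
      exact ae_of_all _ fun t ht => by
        simp only [Pi.zero_apply]
        linarith [hle t ht]
    have heq := (integral_eq_zero_iff_of_nonneg_ae hnn (hψint.sub hgint)).1 hzero
    have hcong : ∫ t in Ioc (0:ℝ) 1, g t ^ q
        = ∫ t in Ioc (0:ℝ) 1, (c * t ^ (-(1:ℝ)/p)) ^ q := by
      refine integral_congr_ae ?_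
      filter_upwards [heq] with t ht
      have h2 : c * t ^ (-(1:ℝ)/p) - g t = 0 := ht
      have h3 : g t = c * t ^ (-(1:ℝ)/p) := by linarith
      rw [h3]
    have hα : (p - q)/(p - 1) ≠ 0 := ne_of_gt (div_pos hpq (by linarith))
    rw [hcong, hψqI, hfe, sub_self, mul_zero, zero_rpow hα, mul_zero, sub_zero]
    apply le_of_eq; ring
  · -- main case f < 1
    set X : ℝ := p * (1 - f) with hX_def
    have hX0 : 0 < X := mul_pos hp0 (by linarith)
    have hX1 : X < 1 := by
      rw [hc_def, div_lt_iff₀ hp0] at hf0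
      have : X = p - f * p := by rw [hX_def]; ring
      linarith
    have hpm1 : 0 < p - 1 := by linarith
    set u : ℝ := X ^ ((1:ℝ)/(p-1)) with hu_def
    have hu0 : 0 < u := rpow_pos_of_pos hX0 _
    have hu1 : u < 1 := rpow_lt_one hX0.le hX1 (by positivity)
    have hup1 : u ^ (p-1) = X := by
      rw [hu_def, ← rpow_mul hX0.le,
        show (1/(p-1))*(p-1) = (1:ℝ) by field_simp, rpow_one]
    set μ : ℝ := c / u with hμ_def
    have hμ0 : 0 < μ := div_pos hc0 hu0
    set t₀ : ℝ := u ^ p with ht₀_def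
    have ht₀0 : 0 < t₀ := rpow_pos_of_pos hu0 _
    have ht₀1 : t₀ < 1 := rpow_lt_one hu0.le hu1 hp0
    have hupq : u ^ (p - q) = X ^ ((p-q)/(p-1)) := by
      rw [hu_def, ← rpow_mul hX0.le,
        show (1/(p-1))*(p-q) = (p-q)/(p-1) by ring]
    have ht₀pow : ∀ s : ℝ, t₀ ^ s = u ^ (p * s) := fun s => by
      rw [ht₀_def, ← rpow_mul hu0.le]
    set m : ℝ → ℝ := fun t => min (c * t ^ (-(1:ℝ)/p)) μ with hm_def
    have hexp_nonpos : -(1:ℝ)/p ≤ 0 := by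
      rw [neg_div]
      exact neg_nonpos.2 (by positivity)
    have hinv : t₀ ^ (-(1:ℝ)/p) = u⁻¹ := by
      rw [ht₀pow, show p * (-(1:ℝ)/p) = -1 by field_simp, rpow_neg hu0.le, rpow_one]
    have hm_lo : ∀ t ∈ Ioc (0:ℝ) t₀, m t = μ := by
      intro t ht
      have h1 : t₀ ^ (-(1:ℝ)/p) ≤ t ^ (-(1:ℝ)/p) :=
        rpow_le_rpow_of_nonpos ht.1 ht.2 hexp_nonpos
      rw [hinv] at h1
      have h2 : μ ≤ c * t ^ (-(1:ℝ)/p) := by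
        rw [hμ_def, div_eq_mul_inv]
        exact mul_le_mul_of_nonneg_left h1 hc0.le
      exact min_eq_right h2
    have hm_hi : ∀ t ∈ Ioc t₀ 1, m t = c * t ^ (-(1:ℝ)/p) := by
      intro t ht
      have h1 : t ^ (-(1:ℝ)/p) ≤ t₀ ^ (-(1:ℝ)/p) :=
        rpow_le_rpow_of_nonpos ht₀0 ht.1.le hexp_nonpos
      rw [hinv] at h1
      have h2 : c * t ^ (-(1:ℝ)/p) ≤ μ := by
        rw [hμ_def, div_eq_mul_inv]
        exact mul_le_mul_of_nonneg_left h1 hc0.le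
      exact min_eq_left h2
    have hm_nonneg : ∀ t ∈ Ioc (0:ℝ) 1, 0 ≤ m t := fun t ht =>
      le_min (mul_nonneg hc0.le (rpow_nonneg ht.1.le _)) hμ0.le
    have hm_le : ∀ t, m t ≤ μ := fun t => min_le_right _ _
    have hmmeas : Measurable m :=
      ((aux_meas measurable_id _).const_mul c).min measurable_const
    have hmint : IntegrableOn m (Ioc 0 1) volume := by
      refine Integrable.mono'
        (integrableOn_const measure_Ioc_lt_top.ne : IntegrableOn (fun _ => μ) _ _)
        hmmeas.aestronglyMeasurable.restrict ?_
      rw [ae_restrict_iff' measurableSet_Ioc]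
      exact ae_of_all _ fun t ht => by
        rw [Real.norm_eq_abs, abs_of_nonneg (hm_nonneg t ht)]; exact hm_le t
    have hmqmeas : Measurable fun t => m t ^ q := aux_meas hmmeas q
    have hmqint : IntegrableOn (fun t => m t ^ q) (Ioc 0 1) volume := by
      refine Integrable.mono'
        (integrableOn_const measure_Ioc_lt_top.ne : IntegrableOn (fun _ => μ ^ q) _ _)
        hmqmeas.aestronglyMeasurable.restrict ?_
      rw [ae_restrict_iff' measurableSet_Ioc]
      refine ae_of_all _ fun t ht => ?_
      rw [Real.norm_eq_abs, abs_of_nonneg (rpow_nonneg (hm_nonneg t ht) q)]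
      exact rpow_le_rpow (hm_nonneg t ht) (hm_le t) hq0.le
    have hsplit : Ioc (0:ℝ) 1 = Ioc 0 t₀ ∪ Ioc t₀ 1 :=
      (Ioc_union_Ioc_eq_Ioc ht₀0.le ht₀1.le).symm
    have hvol : (volume (Ioc (0:ℝ) t₀)).toReal = t₀ := by
      rw [Real.volume_Ioc, ENNReal.toReal_ofReal (by linarith), sub_zero]
    have hupp : u ^ (p-1) = u ^ p / u := by rw [rpow_sub hu0, rpow_one]
    -- ∫ m = f
    have hmI : ∫ t in Ioc (0:ℝ) 1, m t = f := by
      have e1 : ∫ t in Ioc (0:ℝ) t₀, m t = t₀ * μ := by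
        rw [setIntegral_congr_fun measurableSet_Ioc hm_lo, setIntegral_const,
          smul_eq_mul, measureReal_def, hvol]
      have e2 : ∫ t in Ioc t₀ 1, m t = c * ((1 - X) / ((p-1)/p)) := by
        rw [setIntegral_congr_fun measurableSet_Ioc hm_hi, integral_const_mul,
          aux_int_rpow hrp ht₀1.le, hr1, ht₀pow,
          show p * ((p-1)/p) = p - 1 by field_simp, hup1]
      have ht₀μ : t₀ * μ = c * X := by
        rw [ht₀_def, hμ_def, ← hup1, hupp]
        field_simp
      rw [hsplit, setIntegral_union (Ioc_disjoint_Ioc_of_le le_rfl) measurableSet_Ioc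
        (hmint.mono_set (by rw [hsplit]; exact subset_union_left))
        (hmint.mono_set (by rw [hsplit]; exact subset_union_right)),
        e1, e2, ht₀μ, hc_def, hX_def]
      field_simp
      ring
    -- ∫ m^q
    have hmqI : ∫ t in Ioc (0:ℝ) 1, m t ^ q
        = c ^ q * ((p - q * u ^ (p - q)) / (p - q)) := by
      have e3 : ∫ t in Ioc (0:ℝ) t₀, m t ^ q = t₀ * μ ^ q := by
        rw [setIntegral_congr_fun measurableSet_Ioc
          (fun t ht => by show m t ^ q = μ ^ q; rw [hm_lo t ht] :
            EqOn (fun t => m t ^ q) (fun _ => μ ^ q) (Ioc 0 t₀)),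
          setIntegral_const, smul_eq_mul, measureReal_def, hvol]
      have e4 : ∫ t in Ioc t₀ 1, m t ^ q
          = c ^ q * ((1 - u ^ (p - q)) / ((p-q)/p)) := by
        have eq4 : EqOn (fun t => m t ^ q)
            (fun t : ℝ => c ^ q * t ^ ((-(1:ℝ)/p) * q)) (Ioc t₀ 1) := fun t ht => by
          simp only
          rw [hm_hi t ht]
          exact hψq_eq ⟨ht₀0.trans ht.1, ht.2⟩
        rw [setIntegral_congr_fun measurableSet_Ioc eq4, integral_const_mul,
          aux_int_rpow hrq ht₀1.le, hr2, ht₀pow,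
          show p * ((p-q)/p) = p - q by field_simp]
      have ht₀μq : t₀ * μ ^ q = c ^ q * u ^ (p - q) := by
        rw [ht₀_def, hμ_def, div_rpow hc0.le hu0.le, rpow_sub hu0]
        field_simp
      rw [hsplit, setIntegral_union (Ioc_disjoint_Ioc_of_le le_rfl) measurableSet_Ioc
        (hmqint.mono_set (by rw [hsplit]; exact subset_union_left))
        (hmqint.mono_set (by rw [hsplit]; exact subset_union_right)),
        e3, e4, ht₀μq]
      field_simp
      ring
    -- pointwise tangent inequality
    have key : ∀ t ∈ Ioc (0:ℝ) 1,
        m t ^ q + (q * μ ^ (q-1)) * (g t - m t) ≤ g t ^ q := by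
      intro t ht
      rcases le_total (c * t ^ (-(1:ℝ)/p)) μ with hcase | hcase
      · have hm : m t = c * t ^ (-(1:ℝ)/p) := min_eq_left hcase
        have hψpos : 0 < c * t ^ (-(1:ℝ)/p) :=
          mul_pos hc0 (rpow_pos_of_pos ht.1 _)
        have htan := aux_tangent hq.le (hg0 t ht) hψpos
        have hmono : (c * t ^ (-(1:ℝ)/p)) ^ (q-1) ≤ μ ^ (q-1) :=
          rpow_le_rpow hψpos.le hcase (by linarith)
        have hgψ : g t - c * t ^ (-(1:ℝ)/p) ≤ 0 := sub_nonpos.2 (hle t ht)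
        have h5 : q * (c * t ^ (-(1:ℝ)/p)) ^ (q-1) ≤ q * μ ^ (q-1) :=
          mul_le_mul_of_nonneg_left hmono hq0.le
        have h6 : (q * μ ^ (q-1)) * (g t - c * t ^ (-(1:ℝ)/p))
            ≤ (q * (c * t ^ (-(1:ℝ)/p)) ^ (q-1)) * (g t - c * t ^ (-(1:ℝ)/p)) :=
          mul_le_mul_of_nonpos_right h5 hgψ
        rw [hm]
        calc (c * t ^ (-(1:ℝ)/p)) ^ q
              + (q * μ ^ (q-1)) * (g t - c * t ^ (-(1:ℝ)/p))
            ≤ (c * t ^ (-(1:ℝ)/p)) ^ q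
              + q * (c * t ^ (-(1:ℝ)/p)) ^ (q-1) * (g t - c * t ^ (-(1:ℝ)/p)) := by
              linarith
          _ ≤ g t ^ q := htan
      · have hm : m t = μ := min_eq_right hcase
        rw [hm]
        exact aux_tangent hq.le (hg0 t ht) hμ0
    have hInt1 : IntegrableOn (fun t => (q * μ ^ (q-1)) * (g t - m t)) (Ioc 0 1) volume := by
      exact (hgint.sub hmint).const_mul _
    have hInt0 : IntegrableOn (fun t => m t ^ q + (q * μ ^ (q-1)) * (g t - m t))
        (Ioc 0 1) volume := hmqint.add hInt1
    have hIneq := setIntegral_mono_on hInt0 hgqint measurableSet_Ioc key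
    rw [integral_add hmqint hInt1, integral_const_mul,
      integral_sub hgint hmint, hf, hmI, sub_self, mul_zero, add_zero, hmqI] at hIneq
    calc c ^ q * (1/(p-q)) * (p - q * X ^ ((p-q)/(p-1)))
        = c ^ q * ((p - q * u ^ (p-q)) / (p-q)) := by
          rw [← hupq]; ring
      _ ≤ _ := hIneq
end

section
/- Let 1 < q < p, 0 < f ≤ 1, and define A_f = f^q if 0 < f ≤ (p-1)/p, and A_f = ((p-1)/p)^q (1/(p-q)) (p - q·(p(1-f))^{(p-q)/(p-1)}) if (p-1)/p < f ≤ 1, and Γ = ((p-1)/p)^q p/(p-q). Then for every A with A_f ≤ A ≤ Γ f^{(p-q)/(p-1)} there exists a measurable g : (0,1] → [0,∞) with g(t) ≤ ((p-1)/p) t^{-1/p} on (0,1], ∫₀¹ g = f, and ∫₀¹ g^q = A. -/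
open MeasureTheory Set

section helpers
private lemma rpow_ion {r : ℝ} (hr : -1 < r) {x y : ℝ} (hxy : x ≤ y) :
    MeasureTheory.IntegrableOn (fun t => t ^ r) (Set.Ioc x y) :=
  (intervalIntegrable_iff_integrableOn_Ioc_of_le hxy).1 (intervalIntegral.intervalIntegrable_rpow' hr)

private lemma pint (s m k r : ℝ) (hr : -1 < r) (hs0 : 0 ≤ s) (hs1 : s ≤ 1) :
    ∫ t in Set.Ioc (0:ℝ) 1, (if t ≤ s then m else k * t ^ r)
      = m * s + k * ((1 - s ^ (r+1)) / (r+1)) := by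
  have h01 : Set.Ioc (0:ℝ) 1 = Set.Ioc 0 s ∪ Set.Ioc s 1 := (Set.Ioc_union_Ioc_eq_Ioc hs0 hs1).symm
  have hiu : IntegrableOn (fun _ : ℝ => m) (Set.Ioc (0:ℝ) s) := integrableOn_const measure_Ioc_lt_top.ne
  have hiv : IntegrableOn (fun t : ℝ => k * t ^ r) (Set.Ioc s 1) := (rpow_ion hr hs1).const_mul k
  have e1 : EqOn (fun t : ℝ => if t ≤ s then m else k * t ^ r) (fun _ => m) (Set.Ioc 0 s) :=
    fun t ht => if_pos ht.2
  have e2 : EqOn (fun t : ℝ => if t ≤ s then m else k * t ^ r) (fun t => k * t ^ r) (Set.Ioc s 1) :=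
    fun t ht => if_neg (not_le.2 ht.1)
  rw [h01, setIntegral_union (Set.Ioc_disjoint_Ioc_of_le le_rfl) measurableSet_Ioc
      ((hiu.congr_fun e1.symm measurableSet_Ioc))
      ((hiv.congr_fun e2.symm measurableSet_Ioc)),
    setIntegral_congr_fun measurableSet_Ioc e1, setIntegral_congr_fun measurableSet_Ioc e2,
    setIntegral_const]
  rw [← intervalIntegral.integral_of_le hs1, intervalIntegral.integral_const_mul,
    integral_rpow (Or.inl hr)]
  simp [Real.volume_Ioc, smul_eq_mul, Real.one_rpow, ENNReal.toReal_ofReal hs0, mul_comm, max_eq_left hs0]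

private lemma pint2 (s k r : ℝ) (hr : -1 < r) (hs0 : 0 ≤ s) (hs1 : s ≤ 1) :
    ∫ t in Set.Ioc (0:ℝ) 1, (if t ≤ s then k * t ^ r else 0)
      = k * (s ^ (r+1) / (r+1)) := by
  have h01 : Set.Ioc (0:ℝ) 1 = Set.Ioc 0 s ∪ Set.Ioc s 1 := (Set.Ioc_union_Ioc_eq_Ioc hs0 hs1).symm
  have hiu : IntegrableOn (fun t : ℝ => k * t ^ r) (Set.Ioc (0:ℝ) s) :=
    (rpow_ion hr hs0).const_mul k
  have hiv : IntegrableOn (fun _ : ℝ => (0:ℝ)) (Set.Ioc s 1) := integrableOn_const measure_Ioc_lt_top.ne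
  have e1 : EqOn (fun t : ℝ => if t ≤ s then k * t ^ r else 0) (fun t => k * t ^ r) (Set.Ioc 0 s) :=
    fun t ht => if_pos ht.2
  have e2 : EqOn (fun t : ℝ => if t ≤ s then k * t ^ r else 0) (fun _ => (0:ℝ)) (Set.Ioc s 1) :=
    fun t ht => if_neg (not_le.2 ht.1)
  rw [h01, setIntegral_union (Set.Ioc_disjoint_Ioc_of_le le_rfl) measurableSet_Ioc
      ((hiu.congr_fun e1.symm measurableSet_Ioc))
      ((hiv.congr_fun e2.symm measurableSet_Ioc)),
    setIntegral_congr_fun measurableSet_Ioc e1, setIntegral_congr_fun measurableSet_Ioc e2]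
  rw [← intervalIntegral.integral_of_le hs0, intervalIntegral.integral_const_mul,
    integral_rpow (Or.inl hr)]
  have h0 : (0:ℝ) ^ (r+1) = 0 := Real.zero_rpow (by linarith)
  simp [h0]
end helpers

set_option maxHeartbeats 1000000 in
theorem stmt_7 (p q : ℝ) (hq : 1 < q) (hqp : q < p)
    (f : ℝ) (hf0 : 0 < f) (hf1 : f ≤ 1)
    (Af : ℝ)
    (hAf : Af = if f ≤ (p - 1) / p then f ^ q
      else ((p - 1) / p) ^ q * (1 / (p - q)) *
        (p - q * (p * (1 - f)) ^ ((p - q) / (p - 1))))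
    (A : ℝ) (hA1 : Af ≤ A)
    (hA2 : A ≤ ((p - 1) / p) ^ q * (p / (p - q)) * f ^ ((p - q) / (p - 1))) :
    ∃ g : ℝ → ℝ, Measurable g ∧
      (∀ t ∈ Set.Ioc (0:ℝ) 1, 0 ≤ g t ∧ g t ≤ ((p - 1) / p) * t ^ (-(1:ℝ)/p)) ∧
      (∫ t in Set.Ioc (0:ℝ) 1, g t = f) ∧
      (∫ t in Set.Ioc (0:ℝ) 1, (g t) ^ q = A) := by
  have hp1 : 1 < p := hq.trans hqp
  have hp0 : 0 < p := by linarith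
  have hq0 : 0 < q := by linarith
  have hpq : 0 < p - q := by linarith
  have hp1' : 0 < p - 1 := by linarith
  set c : ℝ := (p - 1) / p with hc
  have hc0 : 0 < c := div_pos hp1' hp0
  have hc1 : c < 1 := by rw [hc, div_lt_one hp0]; linarith
  set r : ℝ := -(1:ℝ)/p with hrdef
  have hr : -1 < r := by rw [hrdef, neg_div, neg_lt_neg_iff, div_lt_one hp0]; linarith
  have hr1 : r + 1 = c := by rw [hrdef, hc]; field_simp; ring
  have hrq : -1 < r * q := by
    have h : r * q = -(q/p) := by rw [hrdef]; ring
    rw [h, neg_lt_neg_iff, div_lt_one hp0]; linarith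
  have hrq1 : r * q + 1 = (p - q)/p := by rw [hrdef]; field_simp; ring
  have hrqpos : 0 < r * q + 1 := by linarith
  have hrneg : r ≤ 0 := by rw [hrdef, neg_div]; exact neg_nonpos.2 (by positivity)
  -- the extremal parameters for the lower extremal function G1
  obtain ⟨b, m, hb0, hb1, hm0, hmbnd, hI1, hJ1⟩ :
      ∃ b m : ℝ, 0 ≤ b ∧ b ≤ 1 ∧ 0 ≤ m ∧
        (∀ t : ℝ, 0 < t → t ≤ b → m ≤ c * t ^ r) ∧
        (m * b + c * ((1 - b ^ (r+1)) / (r+1)) = f) ∧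
        (m ^ q * b + c ^ q * ((1 - b ^ (r*q+1)) / (r*q+1)) = Af) := by
    by_cases hfc : f ≤ c
    · refine ⟨1, f, zero_le_one, le_refl 1, hf0.le, ?_, ?_, ?_⟩
      · intro t ht0 ht1
        have h1 : (1:ℝ) ^ r ≤ t ^ r := Real.rpow_le_rpow_of_nonpos ht0 ht1 hrneg
        rw [Real.one_rpow] at h1
        calc f ≤ c := hfc
          _ = c * 1 := (mul_one c).symm
          _ ≤ c * t ^ r := mul_le_mul_of_nonneg_left h1 hc0.le
      · simp [Real.one_rpow]
      · rw [hAf, if_pos hfc]; simp [Real.one_rpow]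
    · push_neg at hfc
      set X : ℝ := p * (1 - f) with hX
      have hX0 : 0 ≤ X := mul_nonneg hp0.le (by linarith)
      have hX1 : X < 1 := by
        rw [hc, div_lt_iff₀ hp0] at hfc
        have he : p * (1 - f) = p - f * p := by ring
        rw [hX, he]; linarith
      set b : ℝ := X ^ (p/(p-1)) with hbdef
      have hb0 : 0 ≤ b := Real.rpow_nonneg hX0 _
      have hb1 : b ≤ 1 := Real.rpow_le_one hX0 hX1.le (by positivity)
      have he1 : (p/(p-1)) * (r+1) = 1 := by rw [hr1, hc]; field_simp
      have hbc : b ^ (r+1) = X := by rw [hbdef, ← Real.rpow_mul hX0, he1, Real.rpow_one]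
      have he2 : (p/(p-1)) * (r*q+1) = (p-q)/(p-1) := by rw [hrq1]; field_simp
      have hbq : b ^ (r*q+1) = X ^ ((p-q)/(p-1)) := by rw [hbdef, ← Real.rpow_mul hX0, he2]
      set m : ℝ := c * b ^ r with hmdef
      have hm0 : 0 ≤ m := mul_nonneg hc0.le (Real.rpow_nonneg hb0 r)
      have hmb : m * b = c * X := by
        rcases eq_or_lt_of_le hb0 with h0 | h0
        · have hX00 : X = 0 := by
            by_contra hXne
            have h1 : 0 < X := lt_of_le_of_ne hX0 (Ne.symm hXne)
            have h2 := Real.rpow_pos_of_pos h1 (p/(p-1))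
            rw [← hbdef] at h2; linarith
          simp [← h0, hX00]
        · rw [hmdef, mul_assoc, ← Real.rpow_add_one (ne_of_gt h0) r, hbc]
      have hmqb : m ^ q * b = c ^ q * b ^ (r*q+1) := by
        rcases eq_or_lt_of_le hb0 with h0 | h0
        · rw [← h0, Real.zero_rpow (ne_of_gt hrqpos)]; ring
        · rw [hmdef, Real.mul_rpow hc0.le (Real.rpow_nonneg hb0 r), ← Real.rpow_mul hb0,
            mul_assoc, ← Real.rpow_add_one (ne_of_gt h0)]
      refine ⟨b, m, hb0, hb1, hm0, ?_, ?_, ?_⟩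
      · intro t ht0 htb
        have h1 : b ^ r ≤ t ^ r := Real.rpow_le_rpow_of_nonpos ht0 htb hrneg
        rw [hmdef]
        exact mul_le_mul_of_nonneg_left h1 hc0.le
      · rw [hmb, hbc, hr1]
        rw [hc, hX]
        field_simp
        ring
      · rw [hmqb, hbq, hrq1, hAf, if_neg (not_le.2 hfc)]
        field_simp
        ring
  -- the upper extremal function cutoff
  set a : ℝ := f ^ (p/(p-1)) with hadef
  have ha0 : 0 ≤ a := Real.rpow_nonneg hf0.le _
  have ha1 : a ≤ 1 := Real.rpow_le_one hf0.le hf1 (by positivity)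
  have hea1 : (p/(p-1)) * (r+1) = 1 := by rw [hr1, hc]; field_simp
  have hac : a ^ (r+1) = f := by rw [hadef, ← Real.rpow_mul hf0.le, hea1, Real.rpow_one]
  have hea2 : (p/(p-1)) * (r*q+1) = (p-q)/(p-1) := by rw [hrq1]; field_simp
  have haq : a ^ (r*q+1) = f ^ ((p-q)/(p-1)) := by rw [hadef, ← Real.rpow_mul hf0.le, hea2]
  set G1 : ℝ → ℝ := fun t => if t ≤ b then m else c * t ^ r with hG1def
  set G2 : ℝ → ℝ := fun t => if t ≤ a then c * t ^ r else 0 with hG2def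
  have mG1 : Measurable G1 := by
    rw [hG1def]
    exact Measurable.ite measurableSet_Iic measurable_const
      ((measurable_id.pow_const r).const_mul c)
  have mG2 : Measurable G2 := by
    rw [hG2def]
    exact Measurable.ite measurableSet_Iic ((measurable_id.pow_const r).const_mul c)
      measurable_const
  have hG1b : ∀ t ∈ Set.Ioc (0:ℝ) 1, 0 ≤ G1 t ∧ G1 t ≤ c * t ^ r := by
    intro t ht
    simp only [hG1def]
    split_ifs with h
    · exact ⟨hm0, hmbnd t ht.1 h⟩
    · exact ⟨mul_nonneg hc0.le (Real.rpow_nonneg ht.1.le r), le_refl _⟩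
  have hG2b : ∀ t ∈ Set.Ioc (0:ℝ) 1, 0 ≤ G2 t ∧ G2 t ≤ c * t ^ r := by
    intro t ht
    simp only [hG2def]
    split_ifs with h
    · exact ⟨mul_nonneg hc0.le (Real.rpow_nonneg ht.1.le r), le_refl _⟩
    · exact ⟨le_refl 0, mul_nonneg hc0.le (Real.rpow_nonneg ht.1.le r)⟩
  have hIB : IntegrableOn (fun t : ℝ => c * t ^ r) (Set.Ioc 0 1) := (rpow_ion hr zero_le_one).const_mul c
  have hIBq : IntegrableOn (fun t : ℝ => c ^ q * t ^ (r*q)) (Set.Ioc 0 1) :=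
    (rpow_ion hrq zero_le_one).const_mul _
  have habs : ∀ t ∈ Set.Ioc (0:ℝ) 1, ‖c * t ^ r‖ = c * t ^ r := by
    intro t ht
    rw [Real.norm_eq_abs, abs_of_nonneg (mul_nonneg hc0.le (Real.rpow_nonneg ht.1.le r))]
  have hIG1 : IntegrableOn G1 (Set.Ioc 0 1) := by
    apply MeasureTheory.Integrable.mono hIB mG1.aestronglyMeasurable
    filter_upwards [ae_restrict_mem measurableSet_Ioc] with t ht
    rw [Real.norm_eq_abs, abs_of_nonneg (hG1b t ht).1, habs t ht]
    exact (hG1b t ht).2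
  have hIG2 : IntegrableOn G2 (Set.Ioc 0 1) := by
    apply MeasureTheory.Integrable.mono hIB mG2.aestronglyMeasurable
    filter_upwards [ae_restrict_mem measurableSet_Ioc] with t ht
    rw [Real.norm_eq_abs, abs_of_nonneg (hG2b t ht).1, habs t ht]
    exact (hG2b t ht).2
  have hIG1v : ∫ t in Set.Ioc (0:ℝ) 1, G1 t = f := by
    simp only [hG1def]
    rw [pint b m c r hr hb0 hb1]; exact hI1
  have hIG2v : ∫ t in Set.Ioc (0:ℝ) 1, G2 t = f := by
    simp only [hG2def]
    rw [pint2 a c r hr ha0 ha1, hac, hr1]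
    field_simp
  have hG1q : ∫ t in Set.Ioc (0:ℝ) 1, (G1 t) ^ q = Af := by
    have e : ∫ t in Set.Ioc (0:ℝ) 1, (G1 t) ^ q
        = ∫ t in Set.Ioc (0:ℝ) 1, (if t ≤ b then m ^ q else c ^ q * t ^ (r*q)) := by
      apply setIntegral_congr_fun measurableSet_Ioc
      intro t ht
      simp only [hG1def]
      split_ifs with h
      · rfl
      · rw [Real.mul_rpow hc0.le (Real.rpow_nonneg ht.1.le r), ← Real.rpow_mul ht.1.le]
    rw [e, pint b (m^q) (c^q) (r*q) hrq hb0 hb1]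
    exact hJ1
  have hG2q : ∫ t in Set.Ioc (0:ℝ) 1, (G2 t) ^ q
      = c ^ q * (p/(p-q)) * f ^ ((p-q)/(p-1)) := by
    have e : ∫ t in Set.Ioc (0:ℝ) 1, (G2 t) ^ q
        = ∫ t in Set.Ioc (0:ℝ) 1, (if t ≤ a then c ^ q * t ^ (r*q) else 0) := by
      apply setIntegral_congr_fun measurableSet_Ioc
      intro t ht
      simp only [hG2def]
      split_ifs with h
      · rw [Real.mul_rpow hc0.le (Real.rpow_nonneg ht.1.le r), ← Real.rpow_mul ht.1.le]
      · exact Real.zero_rpow (ne_of_gt hq0)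
    rw [e, pint2 a (c^q) (r*q) hrq ha0 ha1, haq, hrq1]
    field_simp
  -- the family of convex combinations
  set φ : ℝ → ℝ := fun l => ∫ t in Set.Ioc (0:ℝ) 1, (l * G1 t + (1-l) * G2 t) ^ q with hφdef
  have hφ0 : φ 0 = c ^ q * (p/(p-q)) * f ^ ((p-q)/(p-1)) := by
    rw [hφdef]
    simp only
    rw [← hG2q]
    apply setIntegral_congr_fun measurableSet_Ioc
    intro t _
    norm_num
  have hφ1 : φ 1 = Af := by
    rw [hφdef]
    simp only
    rw [← hG1q]
    apply setIntegral_congr_fun measurableSet_Ioc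
    intro t _
    norm_num
  have hφc : ContinuousOn φ (Set.Icc 0 1) := by
    rw [hφdef]
    apply continuousOn_of_dominated (bound := fun t => c ^ q * t ^ (r*q))
    · intro l _
      exact (((mG1.const_mul l).add (mG2.const_mul (1-l))).pow_const q).aestronglyMeasurable
    · intro l hl
      filter_upwards [ae_restrict_mem measurableSet_Ioc] with t ht
      have h1 := hG1b t ht
      have h2 := hG2b t ht
      have hbase0 : 0 ≤ l * G1 t + (1-l) * G2 t :=
        add_nonneg (mul_nonneg hl.1 h1.1) (mul_nonneg (by linarith [hl.2]) h2.1)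
      have hbaseB : l * G1 t + (1-l) * G2 t ≤ c * t ^ r := by
        calc l * G1 t + (1-l) * G2 t
            ≤ l * (c * t ^ r) + (1-l) * (c * t ^ r) :=
              add_le_add (mul_le_mul_of_nonneg_left h1.2 hl.1)
                (mul_le_mul_of_nonneg_left h2.2 (by linarith [hl.2]))
          _ = c * t ^ r := by ring
      rw [Real.norm_eq_abs, abs_of_nonneg (Real.rpow_nonneg hbase0 q)]
      calc (l * G1 t + (1-l) * G2 t) ^ q ≤ (c * t ^ r) ^ q :=
            Real.rpow_le_rpow hbase0 hbaseB hq0.le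
        _ = c ^ q * t ^ (r*q) := by
            rw [Real.mul_rpow hc0.le (Real.rpow_nonneg ht.1.le r), ← Real.rpow_mul ht.1.le]
    · exact hIBq
    · filter_upwards [] with t
      apply Continuous.continuousOn
      apply Continuous.rpow_const
      · exact (continuous_id.mul continuous_const).add
          ((continuous_const.sub continuous_id).mul continuous_const)
      · intro x; exact Or.inr hq0.le
  have hmem : A ∈ Set.Icc (φ 1) (φ 0) := by
    rw [hφ0, hφ1]; exact ⟨hA1, hA2⟩
  obtain ⟨l, hlmem, hφl⟩ := intermediate_value_Icc' zero_le_one hφc hmem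
  refine ⟨fun t => l * G1 t + (1-l) * G2 t, ?_, ?_, ?_, ?_⟩
  · exact (mG1.const_mul l).add (mG2.const_mul (1-l))
  · intro t ht
    have h1 := hG1b t ht
    have h2 := hG2b t ht
    constructor
    · exact add_nonneg (mul_nonneg hlmem.1 h1.1) (mul_nonneg (by linarith [hlmem.2]) h2.1)
    · calc l * G1 t + (1-l) * G2 t
          ≤ l * (c * t ^ r) + (1-l) * (c * t ^ r) :=
            add_le_add (mul_le_mul_of_nonneg_left h1.2 hlmem.1)
              (mul_le_mul_of_nonneg_left h2.2 (by linarith [hlmem.2]))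
        _ = c * t ^ r := by ring
  · rw [integral_add (hIG1.const_mul l) (hIG2.const_mul (1-l)),
      MeasureTheory.integral_const_mul, MeasureTheory.integral_const_mul, hIG1v, hIG2v]
    ring
  · exact hφl
end
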